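/- For every C > 0 there exists a nonnegative finitely supported q : ℤ → ℝ such that the guided Schrödinger operator H on ℓ²(ℤ²) associated with q satisfies: the Lebesgue measure of the negative part of its real spectrum exceeds C, i.e., MeasureTheory.volume ({x : ℝ | (x : ℂ) ∈ spectrum ℂ H} ∩ Set.Iio 0) > C. -/

import Mathlib

open scoped ENNReal

noncomputable section

namespace Guided


lemma rp2 (x : ℝ) : x ^ ((2 : ℝ≥0∞).toReal) = x ^ 2 := by
  rw [ENNReal.toReal_ofNat, show ((2:ℝ)) = ((2:ℕ):ℝ) by norm_num, Real.rpow_natCast]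

lemma lp_norm_sq (f : lp (fun _ : ℤ × ℤ => ℂ) 2) :
    ‖f‖ ^ 2 = ∑' m : ℤ × ℤ, ‖f m‖ ^ 2 := by
  have h := lp.norm_rpow_eq_tsum (p := 2) (by norm_num) f
  simpa only [rp2] using h

lemma memlp_two {f : (ℤ × ℤ) → ℂ} (h : Summable fun m => ‖f m‖ ^ 2) :
    Memℓp f (2 : ℝ≥0∞) := by
  apply memℓp_gen
  simpa only [rp2] using h

lemma lp_summable_sq (f : lp (fun _ : ℤ × ℤ => ℂ) 2) :
    Summable fun m : ℤ × ℤ => ‖f m‖ ^ 2 := by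
  have h := lp.memℓp f
  rw [memℓp_gen_iff (by norm_num : 0 < (2:ℝ≥0∞).toReal)] at h
  simpa only [rp2] using h

lemma tsum_col {c h : ℤ → ℝ} (hc : ∀ a, 0 ≤ c a) (hh : ∀ n, 0 ≤ h n)
    (s : Finset ℤ) (hcs : ∀ a ∉ s, c a = 0) (hhs : Summable h) :
    Summable (fun m : ℤ × ℤ => c m.1 * h m.2) ∧
      ∑' m : ℤ × ℤ, c m.1 * h m.2 = (∑ a ∈ s, c a) * ∑' n, h n := by
  have hnn : 0 ≤ fun m : ℤ × ℤ => c m.1 * h m.2 := fun m => mul_nonneg (hc _) (hh _)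
  have hinner : ∀ a : ℤ, Summable fun n => c a * h n := fun a => hhs.mul_left _
  have houter0 : ∀ a : ℤ, ∑' n, c a * h n = c a * ∑' n, h n := fun a => tsum_mul_left
  have houter : Summable fun a : ℤ => ∑' n, c a * h n := by
    apply summable_of_ne_finset_zero (s := s)
    intro a ha
    rw [houter0, hcs a ha, zero_mul]
  have hsum : Summable (fun m : ℤ × ℤ => c m.1 * h m.2) :=
    (summable_prod_of_nonneg hnn).2 ⟨hinner, houter⟩
  refine ⟨hsum, ?_⟩
  rw [Summable.tsum_prod' hsum hinner]
  calc ∑' a, ∑' n, c a * h n = ∑' a : ℤ, c a * ∑' n, h n := by simp only [houter0]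
    _ = ∑ a ∈ s, c a * ∑' n, h n := tsum_eq_sum (fun a ha => by rw [hcs a ha, zero_mul])
    _ = (∑ a ∈ s, c a) * ∑' n, h n := by rw [Finset.sum_mul]

lemma exp_split (x y : ℝ) :
    Complex.exp (((x + y : ℝ) : ℂ) * Complex.I)
      = Complex.exp ((x:ℂ) * Complex.I) * Complex.exp ((y:ℂ) * Complex.I) := by
  rw [← Complex.exp_add]; push_cast; ring_nf

lemma two_cos' (θ : ℝ) :
    Complex.exp (((θ:ℝ):ℂ) * Complex.I) + Complex.exp (((-θ:ℝ):ℂ) * Complex.I)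
      = 2 * ((Real.cos θ : ℝ) : ℂ) := by
  push_cast
  exact (Complex.two_cos _).symm

lemma norm_exp_I (x : ℝ) : ‖Complex.exp ((x:ℂ) * Complex.I)‖ = 1 := by
  rw [Complex.norm_exp_ofReal_mul_I]

set_option maxHeartbeats 2000000 in
/-- Main Weyl-sequence lemma. -/
lemma spec_mem {q : ℤ → ℝ}
    {H : lp (fun _ : ℤ × ℤ => ℂ) 2 →L[ℂ] lp (fun _ : ℤ × ℤ => ℂ) 2}
    (hH : ∀ (f : lp (fun _ : ℤ × ℤ => ℂ) 2) (m₁ m₂ : ℤ),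
      H f (m₁, m₂) = 4 * f (m₁, m₂) - f (m₁ + 1, m₂) - f (m₁ - 1, m₂)
        - f (m₁, m₂ + 1) - f (m₁, m₂ - 1) - (q m₂ : ℂ) * f (m₁, m₂))
    (ψ : ℤ → ℝ) (E : ℝ) (hψ0 : ψ 0 = 1)
    (hψsum : Summable fun n => ψ n ^ 2)
    (heig : ∀ n : ℤ, 2 * ψ n - ψ (n + 1) - ψ (n - 1) - q n * ψ n = E * ψ n)
    (θ : ℝ) :
    ((E + 2 - 2 * Real.cos θ : ℝ) : ℂ) ∈ spectrum ℂ H := by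
  set lam : ℝ := E + 2 - 2 * Real.cos θ with hlamdef
  by_contra hmem
  rw [spectrum.notMem_iff] at hmem
  obtain ⟨U, hU⟩ := hmem
  set T : lp (fun _ : ℤ × ℤ => ℂ) 2 →L[ℂ] lp (fun _ : ℤ × ℤ => ℂ) 2 := ↑U⁻¹ with hT
  have hinv : ∀ f, T ((algebraMap ℂ _ (lam:ℂ) - H) f) = f := by
    intro f
    have h1 : ((↑U⁻¹ * ↑U : lp (fun _ : ℤ × ℤ => ℂ) 2 →L[ℂ] lp (fun _ : ℤ × ℤ => ℂ) 2)) f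
        = (1 : lp (fun _ : ℤ × ℤ => ℂ) 2 →L[ℂ] lp (fun _ : ℤ × ℤ => ℂ) 2) f := by
      rw [U.inv_mul]
    rw [hU] at h1
    simpa [ContinuousLinearMap.mul_apply] using h1
  have hbound : ∀ f, ‖f‖ ≤ ‖T‖ * ‖(algebraMap ℂ _ (lam:ℂ) - H) f‖ := by
    intro f
    conv_lhs => rw [← hinv f]
    exact T.le_opNorm _
  -- the 1D eigenfunction sum
  set Sψ : ℝ := ∑' n, ψ n ^ 2 with hSψ
  have hSψ1 : 1 ≤ Sψ := by
    have := Summable.le_tsum hψsum 0 (fun j _ => sq_nonneg (ψ j))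
    rw [hψ0] at this; simpa using this
  obtain ⟨N, hN⟩ := exists_nat_gt (max 2 (4 * ‖T‖ ^ 2))
  have hN2 : (2:ℝ) < N := lt_of_le_of_lt (le_max_left _ _) hN
  have hNT : 4 * ‖T‖ ^ 2 < (N:ℝ) := lt_of_le_of_lt (le_max_right _ _) hN
  have hN3 : 3 ≤ (N:ℤ) := by
    have : (2:ℕ) < N := by exact_mod_cast hN2
    omega
  -- the cutoff wave in the first coordinate
  set g : ℤ → ℂ := fun a =>
    if 0 ≤ a ∧ a < (N:ℤ) then Complex.exp (((θ * (a:ℝ) : ℝ) : ℂ) * Complex.I) else 0 with hg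
  set F : ℤ × ℤ → ℂ := fun m => g m.1 * (ψ m.2 : ℂ) with hF
  have hgnorm : ∀ a : ℤ, ‖g a‖ ^ 2 = (if 0 ≤ a ∧ a < (N:ℤ) then (1:ℝ) else 0) := by
    intro a
    by_cases h : 0 ≤ a ∧ a < (N:ℤ)
    · rw [hg]; simp only [if_pos h]; rw [norm_exp_I]; norm_num
    · rw [hg]; simp only [if_neg h]; simp
  have hFnormsq : ∀ m : ℤ × ℤ,
      ‖F m‖ ^ 2 = (if 0 ≤ m.1 ∧ m.1 < (N:ℤ) then (1:ℝ) else 0) * ψ m.2 ^ 2 := by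
    intro m
    rw [hF]
    simp only [norm_mul, mul_pow, hgnorm]
    congr 1
    rw [Complex.norm_real, Real.norm_eq_abs, sq_abs]
  have hcol := tsum_col (c := fun a => if 0 ≤ a ∧ a < (N:ℤ) then (1:ℝ) else 0)
      (h := fun n => ψ n ^ 2) (fun a => by split <;> norm_num)
      (fun n => sq_nonneg _) (Finset.Ico 0 (N:ℤ))
      (fun a ha => by rw [if_neg]; intro hcon; exact ha (Finset.mem_Ico.mpr hcon))
      hψsum
  have hFsummable : Summable fun m : ℤ × ℤ => ‖F m‖ ^ 2 :=
    hcol.1.congr (fun m => (hFnormsq m).symm)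
  set uu : lp (fun _ : ℤ × ℤ => ℂ) 2 := ⟨F, memlp_two hFsummable⟩ with huu
  have huco : ∀ m : ℤ × ℤ, uu m = F m := fun m => rfl
  have hucosq : (fun m : ℤ × ℤ => ‖uu m‖ ^ 2)
      = fun m : ℤ × ℤ => (if 0 ≤ m.1 ∧ m.1 < (N:ℤ) then (1:ℝ) else 0) * ψ m.2 ^ 2 := by
    funext m; rw [huco, hFnormsq]
  have hindsum : ∑ a ∈ Finset.Ico (0:ℤ) (N:ℤ),
      (if 0 ≤ a ∧ a < (N:ℤ) then (1:ℝ) else 0) = (N:ℝ) := by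
    rw [Finset.sum_congr rfl (fun a ha => if_pos (Finset.mem_Ico.mp ha))]
    rw [Finset.sum_const, Int.card_Ico]
    simp
  have hunorm : ‖uu‖ ^ 2 = (N:ℝ) * Sψ := by
    rw [lp_norm_sq, hucosq]
    have h2 := hcol.2
    simp only [hindsum] at h2
    exact h2
  -- plane-wave helpers
  set ee : ℤ → ℂ := fun x => Complex.exp (((θ * (x:ℝ) : ℝ):ℂ) * Complex.I) with hee
  have eenorm : ∀ x : ℤ, ‖ee x‖ = 1 := fun x => norm_exp_I _
  have eekey : ∀ x : ℤ, ee (x+1) + ee (x-1) = 2 * ((Real.cos θ : ℝ):ℂ) * ee x := by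
    intro x
    have h1 : (θ * ((x+1:ℤ):ℝ) : ℝ) = (θ * (x:ℝ)) + θ := by push_cast; ring
    have h2 : (θ * ((x-1:ℤ):ℝ) : ℝ) = (θ * (x:ℝ)) + (-θ) := by push_cast; ring
    rw [hee]; dsimp only
    rw [h1, h2, exp_split, exp_split, ← mul_add, two_cos']
    ring
  have hgin : ∀ x : ℤ, 0 ≤ x → x < (N:ℤ) → g x = ee x := by
    intro x h1 h2; rw [hg]; dsimp only; rw [if_pos ⟨h1, h2⟩]
  have hgout : ∀ x : ℤ, x < 0 ∨ (N:ℤ) ≤ x → g x = 0 := by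
    intro x h
    rw [hg]; dsimp only
    rw [if_neg (by omega : ¬(0 ≤ x ∧ x < (N:ℤ)))]
  -- the defect coefficients
  set cf : ℤ → ℂ := fun x => g (x+1) + g (x-1) - 2 * ((Real.cos θ : ℝ):ℂ) * g x with hcf
  set Vu := (algebraMap ℂ (lp (fun _ : ℤ × ℤ => ℂ) 2 →L[ℂ] lp (fun _ : ℤ × ℤ => ℂ) 2)
      ((lam:ℝ):ℂ) - H) uu with hVu
  have heigC : ∀ b : ℤ, ((ψ (b+1) : ℝ):ℂ) + ((ψ (b-1) : ℝ):ℂ)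
      + ((q b : ℝ):ℂ) * ((ψ b:ℝ):ℂ) = (2 - ((E:ℝ):ℂ)) * ((ψ b:ℝ):ℂ) := by
    intro b
    have h2 : ψ (b+1) + ψ (b-1) + q b * ψ b = (2 - E) * ψ b := by
      have := heig b; linarith
    exact_mod_cast congrArg (fun r : ℝ => (r:ℂ)) h2
  have hlamC : ((lam:ℝ):ℂ) = ((E:ℝ):ℂ) + 2 - 2*((Real.cos θ:ℝ):ℂ) := by
    rw [hlamdef]; push_cast; ring
  have hVco : ∀ m : ℤ × ℤ, Vu m = cf m.1 * ((ψ m.2 : ℝ):ℂ) := by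
    intro m
    obtain ⟨a, b⟩ := m
    have h1 : Vu (a,b) = ((lam:ℝ):ℂ) * uu (a,b) - H uu (a,b) := by
      rw [hVu, ContinuousLinearMap.sub_apply, lp.coeFn_sub, Pi.sub_apply,
        Algebra.algebraMap_eq_smul_one, ContinuousLinearMap.smul_apply,
        ContinuousLinearMap.one_apply, lp.coeFn_smul, Pi.smul_apply, smul_eq_mul]
    rw [h1, hH uu a b]
    have hc : ∀ x y : ℤ, uu (x, y) = g x * ((ψ y:ℝ):ℂ) := fun x y => rfl
    rw [hc a b, hc (a+1) b, hc (a-1) b, hc a (b+1), hc a (b-1), hcf]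
    dsimp only
    linear_combination g a * heigC b + (g a * ((ψ b:ℝ):ℂ)) * hlamC
  -- the four-column support of the defect
  set s4 : Finset ℤ := {-1, 0, (N:ℤ)-1, (N:ℤ)} with hs4
  have hmem4 : ∀ x : ℤ, x ∈ s4 ↔ (x = -1 ∨ x = 0 ∨ x = (N:ℤ)-1 ∨ x = (N:ℤ)) := by
    intro x; rw [hs4]; simp [Finset.mem_insert]
  have hcnorm : ∀ x : ℤ, ‖cf x‖ ^ 2 ≤ (if x ∈ s4 then (1:ℝ) else 0) := by
    intro x
    have hif : (0:ℝ) ≤ (if x ∈ s4 then (1:ℝ) else 0) := by split <;> norm_num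
    by_cases hx1 : x < -1
    · have z1 : g (x+1) = 0 := hgout _ (Or.inl (by omega))
      have z2 : g (x-1) = 0 := hgout _ (Or.inl (by omega))
      have z3 : g x = 0 := hgout _ (Or.inl (by omega))
      rw [hcf]; dsimp only; rw [z1, z2, z3]
      simpa using hif
    by_cases hx2 : x = -1
    · subst hx2
      have z1 : g (-1+1) = ee (-1+1) := hgin _ (by omega) (by omega)
      have z2 : g (-1-1) = 0 := hgout _ (Or.inl (by omega))
      have z3 : g (-1) = 0 := hgout _ (Or.inl (by omega))
      have hmem : (-1 : ℤ) ∈ s4 := by rw [hmem4]; tauto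
      rw [hcf]; dsimp only; rw [z1, z2, z3, if_pos hmem]
      simp [eenorm]
    by_cases hx3 : x = 0
    · subst hx3
      have z1 : g (0+1) = ee (0+1) := hgin _ (by omega) (by omega)
      have z2 : g (0-1) = 0 := hgout _ (Or.inl (by omega))
      have z3 : g 0 = ee 0 := hgin _ (by omega) (by omega)
      have hmem : (0:ℤ) ∈ s4 := by rw [hmem4]; tauto
      rw [hcf]; dsimp only; rw [z1, z2, z3, if_pos hmem]
      have hkey := eekey 0
      have hval : ee (0+1) + 0 - 2*((Real.cos θ:ℝ):ℂ) * ee 0 = -(ee (0-1)) := by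
        linear_combination hkey
      rw [hval, norm_neg, eenorm]
      norm_num
    by_cases hx4 : x ≤ (N:ℤ) - 2
    · have z1 : g (x+1) = ee (x+1) := hgin _ (by omega) (by omega)
      have z2 : g (x-1) = ee (x-1) := hgin _ (by omega) (by omega)
      have z3 : g x = ee x := hgin _ (by omega) (by omega)
      rw [hcf]; dsimp only; rw [z1, z2, z3]
      have hval : ee (x+1) + ee (x-1) - 2*((Real.cos θ:ℝ):ℂ) * ee x = 0 := by
        linear_combination eekey x
      rw [hval]
      simpa using hif
    by_cases hx5 : x = (N:ℤ) - 1
    · subst hx5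
      have z1 : g ((N:ℤ)-1+1) = 0 := hgout _ (Or.inr (by omega))
      have z2 : g ((N:ℤ)-1-1) = ee ((N:ℤ)-1-1) := hgin _ (by omega) (by omega)
      have z3 : g ((N:ℤ)-1) = ee ((N:ℤ)-1) := hgin _ (by omega) (by omega)
      have hmem : ((N:ℤ)-1) ∈ s4 := by rw [hmem4]; tauto
      rw [hcf]; dsimp only; rw [z1, z2, z3, if_pos hmem]
      have hkey := eekey ((N:ℤ)-1)
      have hval : 0 + ee ((N:ℤ)-1-1) - 2*((Real.cos θ:ℝ):ℂ) * ee ((N:ℤ)-1)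
          = -(ee ((N:ℤ)-1+1)) := by linear_combination hkey
      rw [hval, norm_neg, eenorm]
      norm_num
    by_cases hx6 : x = (N:ℤ)
    · subst hx6
      have z1 : g ((N:ℤ)+1) = 0 := hgout _ (Or.inr (by omega))
      have z2 : g ((N:ℤ)-1) = ee ((N:ℤ)-1) := hgin _ (by omega) (by omega)
      have z3 : g (N:ℤ) = 0 := hgout _ (Or.inr (by omega))
      have hmem : ((N:ℤ)) ∈ s4 := by rw [hmem4]; tauto
      rw [hcf]; dsimp only; rw [z1, z2, z3, if_pos hmem]
      simp [eenorm]
    · have z1 : g (x+1) = 0 := hgout _ (Or.inr (by omega))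
      have z2 : g (x-1) = 0 := hgout _ (Or.inr (by omega))
      have z3 : g x = 0 := hgout _ (Or.inr (by omega))
      rw [hcf]; dsimp only; rw [z1, z2, z3]
      simpa using hif
  -- bound the defect norm
  have hcol2 := tsum_col (c := fun x => if x ∈ s4 then (1:ℝ) else 0)
      (h := fun n => ψ n ^ 2) (fun x => by split <;> norm_num)
      (fun n => sq_nonneg _) s4 (fun x hx => by rw [if_neg hx]) hψsum
  have hVsum : Summable (fun m : ℤ × ℤ => ‖Vu m‖ ^ 2) := lp_summable_sq Vu
  have hVnorm : ‖Vu‖ ^ 2 ≤ 4 * Sψ := by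
    rw [lp_norm_sq]
    have hle : ∀ m : ℤ × ℤ, ‖Vu m‖ ^ 2 ≤ (if m.1 ∈ s4 then (1:ℝ) else 0) * ψ m.2 ^ 2 := by
      intro m
      rw [hVco m, norm_mul, mul_pow]
      have hr : ‖((ψ m.2:ℝ):ℂ)‖ ^ 2 = ψ m.2 ^ 2 := by
        rw [Complex.norm_real, Real.norm_eq_abs, sq_abs]
      rw [hr]
      exact mul_le_mul_of_nonneg_right (hcnorm m.1) (sq_nonneg _)
    have h2 := Summable.tsum_le_tsum hle hVsum hcol2.1
    refine h2.trans ?_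
    have h3 := hcol2.2
    rw [h3]
    have hsum4 : (∑ x ∈ s4, if x ∈ s4 then (1:ℝ) else 0) ≤ 4 := by
      rw [Finset.sum_congr rfl (fun x hx => if_pos hx), Finset.sum_const]
      have c1 : s4.card ≤ 4 := by
        rw [hs4]
        refine le_trans (Finset.card_insert_le _ _) ?_
        have c2 := Finset.card_insert_le (0:ℤ) ({(N:ℤ)-1, (N:ℤ)} : Finset ℤ)
        have c3 := Finset.card_insert_le ((N:ℤ)-1) ({(N:ℤ)} : Finset ℤ)
        simp only [Finset.card_singleton] at c3
        omega
      have : (s4.card : ℝ) ≤ 4 := by exact_mod_cast c1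
      simpa [nsmul_eq_mul] using this
    exact mul_le_mul_of_nonneg_right hsum4 (le_trans zero_le_one hSψ1)
  -- contradiction
  have hb := hbound uu
  rw [← hVu] at hb
  have hb2 : ‖uu‖ ^ 2 ≤ ‖T‖ ^ 2 * ‖Vu‖ ^ 2 := by
    have h4 := pow_le_pow_left₀ (norm_nonneg uu) hb 2
    rw [mul_pow] at h4; exact h4
  rw [hunorm] at hb2
  have hfin : (N:ℝ) * Sψ ≤ ‖T‖ ^ 2 * (4 * Sψ) :=
    le_trans hb2 (mul_le_mul_of_nonneg_left hVnorm (sq_nonneg _))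
  nlinarith [mul_pos (sub_pos.mpr hNT) (lt_of_lt_of_le zero_lt_one hSψ1)]



/-- single-well target values -/
def Wv (j : ℕ) : ℝ := 8 + 2 * j

def vv (j : ℕ) : ℝ := Wv j - (Wv j)⁻¹

/-- well separation -/
def DD (k : ℕ) : ℕ := k + 3

/-- the potential on ℕ: wells of strength `vv j` at positions `j * DD k`, `j < k` -/
def qn (k n : ℕ) : ℝ :=
  if n % DD k = 0 ∧ n / DD k < k then vv (n / DD k) else 0

/-- shooting solution: `X k w (n+1)` is the value `ψ(n)`, `X k w 0 = ψ(-1) = w⁻¹`. -/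
def X (k : ℕ) (w : ℝ) : ℕ → ℝ
  | 0 => w⁻¹
  | 1 => 1
  | n+2 => (w + w⁻¹ - qn k n) * X k w (n+1) - X k w n

/-- growing-coefficient indicator after well `i` -/
def Af (k i : ℕ) (w : ℝ) : ℝ := X k w (i * DD k + 2) - w⁻¹ * X k w (i * DD k + 1)

/-- decaying-coefficient indicator after well `i` -/
def Bf (k i : ℕ) (w : ℝ) : ℝ := w * X k w (i * DD k + 1) - X k w (i * DD k + 2)

lemma Wv_ge (j : ℕ) : (8:ℝ) ≤ Wv j := by
  unfold Wv
  have : (0:ℝ) ≤ (j:ℝ) := by positivity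
  linarith

lemma Wv_le {j k : ℕ} (h : j < k) : Wv j ≤ 2*k + 6 := by
  unfold Wv
  have : (j:ℝ) ≤ (k:ℝ) - 1 := by
    have : (j:ℝ) + 1 ≤ k := by exact_mod_cast h
    linarith
  linarith

lemma vv_pos (j : ℕ) : 0 < vv j := by
  have h8 := Wv_ge j
  have : (Wv j)⁻¹ ≤ 1 := by
    rw [inv_le_one_iff₀]; right; linarith
  unfold vv; linarith

lemma vv_le_W (j : ℕ) : vv j ≤ Wv j := by
  have h8 := Wv_ge j
  have : 0 < (Wv j)⁻¹ := by positivity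
  unfold vv; linarith

/-- key factorization: `w - w⁻¹ - vv j = (w - Wv j) * (1 + (w * Wv j)⁻¹)` -/
lemma sep_factor (j : ℕ) {w : ℝ} (hw : w ≠ 0) :
    w - w⁻¹ - vv j = (w - Wv j) * (1 + (w * Wv j)⁻¹) := by
  have hW : Wv j ≠ 0 := by have := Wv_ge j; linarith
  unfold vv
  field_simp
  ring

lemma DD_pos (k : ℕ) : 0 < DD k := by unfold DD; omega

lemma qn_well {k j : ℕ} (h : j < k) : qn k (j * DD k) = vv j := by
  unfold qn
  have h1 : j * DD k % DD k = 0 := by simp [Nat.mul_mod_left]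
  have h2 : j * DD k / DD k = j := by
    rw [Nat.mul_div_cancel _ (DD_pos k)]
  rw [h1, h2, if_pos ⟨rfl, h⟩]

lemma qn_mid {k : ℕ} (i t : ℕ) (h1 : 1 ≤ t) (h2 : t < DD k) :
    qn k (i * DD k + t) = 0 := by
  unfold qn
  rw [if_neg]
  rintro ⟨hc, -⟩
  rw [Nat.add_comm, Nat.add_mul_mod_self_right, Nat.mod_eq_of_lt h2] at hc
  omega

lemma qn_far {k n : ℕ} (h : (k-1) * DD k < n) : qn k n = 0 := by
  unfold qn
  rw [if_neg]
  rintro ⟨hc, hd⟩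
  have h3 : DD k * (n / DD k) = n := by
    have := Nat.div_add_mod n (DD k); omega
  have h5 : n / DD k ≤ k - 1 := by omega
  have h6 : DD k * (n / DD k) ≤ DD k * (k-1) := Nat.mul_le_mul_left _ h5
  rw [h3] at h6
  have h7 : (k-1) * DD k = DD k * (k-1) := Nat.mul_comm _ _
  omega

lemma X_rec (k : ℕ) (w : ℝ) (n : ℕ) :
    X k w (n+2) = (w + w⁻¹ - qn k n) * X k w (n+1) - X k w n := rfl

/-- inside a free region the solution is a combination of `w^t` and `w^{-t}` -/
lemma region (k : ℕ) (w : ℝ) (hw : w ≠ 0) (i : ℕ) :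
    ∀ t, t ≤ DD k → (w - w⁻¹) * X k w (i * DD k + 1 + t)
      = Af k i w * w ^ t + Bf k i w * (w⁻¹) ^ t := by
  intro t
  induction t using Nat.strong_induction_on with
  | _ t ih =>
    match t with
    | 0 =>
      intro _
      simp only [pow_zero, mul_one, Nat.add_zero, Af, Bf]
      ring
    | 1 =>
      intro _
      simp only [pow_one, Af, Bf]
      have : i * DD k + 1 + 1 = i * DD k + 2 := by omega
      rw [this]
      field_simp
      ring
    | (t+2) =>
      intro ht
      have h1 := ih (t+1) (by omega) (by omega)
      have h0 := ih t (by omega) (by omega)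
      have hq : qn k (i * DD k + (t+1)) = 0 := qn_mid i (t+1) (by omega) (by omega)
      have i1 : i * DD k + 1 + (t+2) = (i * DD k + (t+1)) + 2 := by omega
      have i2 : (i * DD k + (t+1)) + 1 = i * DD k + 1 + (t+1) := by omega
      rw [i1, X_rec, hq, i2,
        show i * DD k + (t+1) = i * DD k + 1 + t from by omega]
      have e1 : (w - w⁻¹) * ((w + w⁻¹ - 0) * X k w (i * DD k + 1 + (t+1))
          - X k w (i * DD k + 1 + t))
          = (w + w⁻¹) * ((w - w⁻¹) * X k w (i * DD k + 1 + (t+1)))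
            - (w - w⁻¹) * X k w (i * DD k + 1 + t) := by ring
      rw [e1, h1, h0]
      linear_combination (Af k i w * w ^ t + Bf k i w * (w⁻¹) ^ t) * (mul_inv_cancel₀ hw)

/-- transfer across well `i+1` -/
lemma transfer (k : ℕ) (w : ℝ) (hw : 0 < w) (hu : w - w⁻¹ ≠ 0) {i : ℕ} (hik : i + 1 < k) :
    (w - w⁻¹) * Af k (i+1) w
        = Af k i w * (w - w⁻¹ - vv (i+1)) * w ^ (DD k)
          - vv (i+1) * Bf k i w * (w⁻¹) ^ (DD k) ∧
    (w - w⁻¹) * Bf k (i+1) w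
        = Af k i w * vv (i+1) * w ^ (DD k)
          + Bf k i w * (vv (i+1) + (w - w⁻¹)) * (w⁻¹) ^ (DD k) := by
  obtain ⟨t, ht⟩ : ∃ t, DD k = t + 1 := ⟨DD k - 1, by have := DD_pos k; omega⟩
  have hw0 : w ≠ 0 := ne_of_gt hw
  have e1 := region k w hw0 i (t+1) (by omega)
  have e0 := region k w hw0 i t (by omega)
  have i1 : i * DD k + 1 + (t+1) = (i+1) * DD k + 1 := by rw [ht]; ring
  have i0 : i * DD k + 1 + t = (i+1) * DD k := by rw [ht]; ring
  rw [i1] at e1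
  rw [i0] at e0
  have hq : qn k ((i+1) * DD k) = vv (i+1) := qn_well hik
  have e2 : X k w ((i+1) * DD k + 2)
      = (w + w⁻¹ - vv (i+1)) * X k w ((i+1) * DD k + 1) - X k w ((i+1) * DD k) := by
    rw [X_rec, hq]
  have hcc : w * w⁻¹ = 1 := mul_inv_cancel₀ hw0
  constructor
  · show (w - w⁻¹) * (X k w ((i+1) * DD k + 2) - w⁻¹ * X k w ((i+1) * DD k + 1)) = _
    rw [show w ^ DD k = w ^ (t+1) from by rw [ht],
      show (w⁻¹) ^ DD k = (w⁻¹) ^ (t+1) from by rw [ht]]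
    linear_combination (w - w⁻¹) * e2 + (w - vv (i+1)) * e1 - e0
      + (Af k i w * w ^ t + Bf k i w * (w⁻¹) ^ t) * hcc
  · show (w - w⁻¹) * (w * X k w ((i+1) * DD k + 1) - X k w ((i+1) * DD k + 2)) = _
    rw [show w ^ DD k = w ^ (t+1) from by rw [ht],
      show (w⁻¹) ^ DD k = (w⁻¹) ^ (t+1) from by rw [ht]]
    linear_combination (-(w - w⁻¹)) * e2 + (vv (i+1) - w⁻¹) * e1 + e0
      - (Af k i w * w ^ t + Bf k i w * (w⁻¹) ^ t) * hcc

lemma base_vals (k : ℕ) (hk : 0 < k) (w : ℝ) :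
    Af k 0 w = (w - w⁻¹) - vv 0 ∧ Bf k 0 w = vv 0 := by
  have hq : qn k 0 = vv 0 := by
    have h := qn_well (k := k) (j := 0) hk
    simpa using h
  have h2 : X k w 2 = (w + w⁻¹ - qn k 0) * X k w 1 - X k w 0 := X_rec k w 0
  have h1 : X k w 1 = 1 := rfl
  have h0 : X k w 0 = w⁻¹ := rfl
  unfold Af Bf
  simp only [Nat.zero_mul, Nat.zero_add, h2, h1, h0, hq]
  constructor <;> ring

lemma prod_pm {s : ℕ → ℝ} (hs : ∀ i, s i = 1 ∨ s i = -1) (n : ℕ) :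
    (∏ l ∈ Finset.range n, s l) = 1 ∨ (∏ l ∈ Finset.range n, s l) = -1 := by
  induction n with
  | zero => left; simp
  | succ n ih =>
    rw [Finset.prod_range_succ]
    rcases ih with h | h <;> rcases hs n with h2 | h2 <;> rw [h, h2] <;> norm_num

lemma pow_grow (k : ℕ) : 32*(2*(k:ℝ)+9)^2 ≤ (49:ℝ)^(k+3) := by
  induction k with
  | zero => norm_num
  | succ k ih =>
    have h49 : (49:ℝ)^(k+1+3) = 49 * 49^(k+3) := by ring
    rw [h49]
    push_cast
    have hk : (0:ℝ) ≤ (k:ℝ) := by positivity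
    nlinarith [ih]

set_option maxHeartbeats 1200000 in
/-- the inductive sign/ratio invariant along the wells -/
lemma invariant (k : ℕ) (w : ℝ)
    (hw1 : 7 ≤ w) (hw2 : w ≤ 2*(k:ℝ)+9)
    (s : ℕ → ℝ) (hs : ∀ i, s i = 1 ∨ s i = -1)
    (hsep : ∀ i, i < k → 1/2 ≤ s i * ((w - w⁻¹) - vv i)) :
    ∀ i, i < k → 0 < (∏ l ∈ Finset.range (i+1), s l) * Af k i w
      ∧ |Bf k i w| ≤ (8*(2*(k:ℝ)+9)) * ((∏ l ∈ Finset.range (i+1), s l) * Af k i w) := by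
  have hw0 : (0:ℝ) < w := by linarith
  have hinv_pos : 0 < w⁻¹ := by positivity
  have hinv_le : w⁻¹ ≤ 1/7 := by
    rw [inv_le_comm₀ hw0 (by norm_num)] at *
    · linarith
  have hu_pos : (0:ℝ) < w - w⁻¹ := by linarith
  set wmax : ℝ := 2*(k:ℝ)+9 with hwm
  have hwm7 : 7 ≤ wmax := by
    rw [hwm]; have h0 : (0:ℝ) ≤ (k:ℝ) := by positivity
    linarith
  set R : ℝ := w ^ (DD k) with hR
  set R' : ℝ := (w⁻¹) ^ (DD k) with hR'
  have hRpos : 0 < R := by rw [hR]; positivity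
  have hR'pos : 0 < R' := by rw [hR']; positivity
  have hRR' : R * R' = 1 := by
    rw [hR, hR', ← mul_pow, mul_inv_cancel₀ (ne_of_gt hw0), one_pow]
  have hRbig : 32 * wmax^2 ≤ R^2 := by
    have h2 : ((49:ℝ))^(k+3) ≤ (w^2)^(k+3) := pow_le_pow_left₀ (by norm_num) (by nlinarith) _
    have h3 : (w^2)^(k+3) = R^2 := by
      rw [hR, ← pow_mul, ← pow_mul]
      congr 1
      simp [DD]; omega
    have hpg := pow_grow k
    rw [← hwm] at hpg
    linarith
  have hv_bounds : ∀ i, i < k → 0 < vv i ∧ vv i ≤ wmax := by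
    intro i hik
    refine ⟨vv_pos i, ?_⟩
    have h1 := vv_le_W i
    have h2 := Wv_le hik
    rw [hwm]; linarith
  clear_value wmax R R'
  intro i
  induction i with
  | zero =>
    intro hk
    obtain ⟨hA0, hB0⟩ := base_vals k hk w
    rw [Finset.prod_range_one, hA0, hB0]
    have hsep0 := hsep 0 hk
    have hv0 := hv_bounds 0 hk
    constructor
    · calc (0:ℝ) < 1/2 := by norm_num
        _ ≤ s 0 * ((w - w⁻¹) - vv 0) := hsep0
    · rw [abs_of_pos hv0.1]
      have hh := mul_le_mul_of_nonneg_left hsep0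
        (show (0:ℝ) ≤ 8*wmax by linarith)
      linarith [hv0.2]
  | succ i ih =>
    intro hik
    have hik' : i < k := by omega
    obtain ⟨IH1, IH2⟩ := ih hik'
    obtain ⟨tA, tB⟩ := transfer k w hw0 (ne_of_gt hu_pos) hik
    rw [← hR, ← hR'] at tA tB
    set σ : ℝ := ∏ l ∈ Finset.range (i+1), s l with hσ
    have hσpm := prod_pm hs (i+1)
    rw [← hσ] at hσpm
    have hσabs : |σ| = 1 := by rcases hσpm with h|h <;> rw [h] <;> norm_num
    have hsabs : |s (i+1)| = 1 := by rcases hs (i+1) with h|h <;> rw [h] <;> norm_num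
    have hσ' : (∏ l ∈ Finset.range (i+1+1), s l) = σ * s (i+1) := by
      rw [Finset.prod_range_succ, hσ]
    set A := Af k i w with hAd
    set B := Bf k i w with hBd
    set A' := Af k (i+1) w with hA'd
    set B' := Bf k (i+1) w with hB'd
    set v : ℝ := vv (i+1) with hv
    have hvb := hv_bounds (i+1) hik
    rw [← hv] at hvb
    have hsepx := hsep (i+1) hik
    rw [← hv] at hsepx
    clear_value σ A B A' B' v
    have hAabs : |A| = σ*A := by
      rcases hσpm with h|h
      · rw [h, one_mul] at IH1 ⊢
        exact abs_of_pos IH1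
      · rw [h] at IH1 ⊢
        rw [abs_of_neg (by linarith), neg_one_mul]
    have hBabs : |σ * B| = |B| := by rw [abs_mul, hσabs, one_mul]
    -- transfer of A, multiplied by the sign σ * s(i+1)
    have key1 : σ * s (i+1) * ((w - w⁻¹) * A')
        = (σ*A) * (s (i+1) * ((w - w⁻¹) - v)) * R - v * s (i+1) * (σ * B) * R' := by
      linear_combination (σ * s (i+1)) * tA
    have habsT2 : |v * s (i+1) * (σ * B) * R'| ≤ (σ*A) * R / 4 := by
      have h1 : |v * s (i+1) * (σ * B) * R'| = v * |B| * R' := by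
        rw [abs_mul, abs_mul, abs_mul, abs_of_pos hvb.1, hsabs, hBabs,
          abs_of_pos hR'pos]
        ring
      rw [h1]
      have h2 : v * |B| * R' ≤ v * ((8*wmax) * (σ*A)) * R' := by
        apply mul_le_mul_of_nonneg_right _ (le_of_lt hR'pos)
        exact mul_le_mul_of_nonneg_left IH2 hvb.1.le
      refine le_trans h2 ?_
      have h3 : 4 * (v * (8*wmax)) ≤ R^2 := by
        have hm : v * (8*wmax) ≤ wmax * (8*wmax) :=
          mul_le_mul_of_nonneg_right hvb.2 (by linarith)
        nlinarith [hRbig]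
      have h4 : v * ((8*wmax) * (σ*A)) * R' * R ≤ ((σ*A) * R / 4) * R := by
        have l : v * ((8*wmax) * (σ*A)) * R' * R = (v*(8*wmax)) * (σ*A) * (R*R') := by
          ring
        rw [l, hRR', mul_one, show ((σ*A) * R / 4) * R = (σ*A) * (R^2/4) from by ring]
        rw [mul_comm (v*(8*wmax)) (σ*A)]
        apply mul_le_mul_of_nonneg_left _ IH1.le
        linarith
      exact le_of_mul_le_mul_right h4 hRpos
    have keyA : (σ*A) * R / 4 ≤ σ * s (i+1) * ((w - w⁻¹) * A') := by
      have t1 : (σ*A) * (1/2) * R ≤ (σ*A) * (s (i+1) * ((w - w⁻¹) - v)) * R := by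
        apply mul_le_mul_of_nonneg_right _ hRpos.le
        exact mul_le_mul_of_nonneg_left hsepx IH1.le
      have t2 := le_abs_self (v * s (i+1) * (σ * B) * R')
      rw [key1]
      have t3 : (σ*A) * (1/2) * R = ((σ*A) * R)/2 := by ring
      linarith [habsT2]
    have hA'pos : 0 < σ * s (i+1) * A' := by
      have h5 : 0 < σ * s (i+1) * ((w - w⁻¹) * A') := by
        have h6 : (0:ℝ) < (σ*A) * R / 4 := by
          have := mul_pos IH1 hRpos
          linarith
        linarith
      rw [show σ * s (i+1) * ((w - w⁻¹) * A') = (w - w⁻¹) * (σ * s (i+1) * A') from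
        by ring] at h5
      rcases mul_pos_iff.mp h5 with ⟨-, h⟩ | ⟨h, -⟩
      · exact h
      · linarith
    constructor
    · rw [hσ']
      calc (0:ℝ) < σ * s (i+1) * A' := hA'pos
        _ = σ * s (i+1) * A' := rfl
    · -- bound on B'
      have habsB' : (w - w⁻¹) * |B'| ≤ (σ*A)*v*R + ((8*wmax)*(σ*A))*(v + (w-w⁻¹))*R' := by
        have l1 : (w - w⁻¹) * |B'| = |(w - w⁻¹) * B'| := by
          rw [abs_mul, abs_of_pos hu_pos]
        rw [l1, tB]
        refine le_trans (abs_add_le _ _) ?_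
        have b1 : |A * v * R| = (σ*A)*v*R := by
          rw [abs_mul, abs_mul, hAabs, abs_of_pos hvb.1, abs_of_pos hRpos]
        have b2 : |B * (v + (w - w⁻¹)) * R'| ≤ ((8*wmax)*(σ*A))*(v+(w-w⁻¹))*R' := by
          rw [abs_mul, abs_mul, abs_of_pos hR'pos,
            abs_of_pos (show (0:ℝ) < v + (w-w⁻¹) by linarith [hvb.1])]
          apply mul_le_mul_of_nonneg_right _ hR'pos.le
          exact mul_le_mul_of_nonneg_right IH2 (by linarith [hvb.1])
        linarith [b1.le, b2]
      have hb3 : ((8*wmax)*(σ*A))*(v + (w-w⁻¹))*R' ≤ (σ*A)*R/2 := by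
        have h7 : (8*wmax)*(v + (w-w⁻¹)) ≤ R^2/2 := by
          nlinarith [hvb.2, hRbig, hwm7, hw2, hinv_pos]
        have h8 : ((8*wmax)*(σ*A))*(v + (w-w⁻¹))*R' * R ≤ ((σ*A)*R/2)*R := by
          rw [show ((8*wmax)*(σ*A))*(v + (w-w⁻¹))*R'*R
              = ((8*wmax)*(v+(w-w⁻¹))) * (σ*A) * (R*R') from by ring,
            hRR', mul_one,
            show ((σ*A)*R/2)*R = (σ*A)*(R^2/2) from by ring,
            mul_comm ((8*wmax)*(v+(w-w⁻¹))) (σ*A)]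
          exact mul_le_mul_of_nonneg_left h7 IH1.le
        exact le_of_mul_le_mul_right h8 hRpos
      have hb4 : (σ*A)*v*R ≤ (σ*A)*wmax*R := by
        apply mul_le_mul_of_nonneg_right _ hRpos.le
        exact mul_le_mul_of_nonneg_left hvb.2 IH1.le
      have hfin1 : (w - w⁻¹) * |B'| ≤ (σ*A)*R*(wmax + 1/2) := by
        have e : (σ*A)*wmax*R + (σ*A)*R/2 = (σ*A)*R*(wmax + 1/2) := by ring
        linarith [habsB', hb3, hb4, e]
      have hfin2 : (σ*A)*R*(wmax + 1/2) ≤ (8*wmax) * ((w - w⁻¹) * (σ * s (i+1) * A')) := by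
        have h9 : (8*wmax) * ((σ*A)*R/4) ≤ (8*wmax) * (σ * s (i+1) * ((w - w⁻¹) * A')) :=
          mul_le_mul_of_nonneg_left keyA (by linarith)
        have h10 : (σ*A)*R*(wmax + 1/2) ≤ (8*wmax) * ((σ*A)*R/4) := by
          nlinarith [mul_nonneg IH1.le hRpos.le, hwm7]
        calc (σ*A)*R*(wmax + 1/2) ≤ (8*wmax) * ((σ*A)*R/4) := h10
          _ ≤ (8*wmax) * (σ * s (i+1) * ((w - w⁻¹) * A')) := h9
          _ = (8*wmax) * ((w - w⁻¹) * (σ * s (i+1) * A')) := by ring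
      have hch := le_trans hfin1 hfin2
      rw [show (8*wmax) * ((w - w⁻¹) * (σ * s (i+1) * A'))
          = (w - w⁻¹) * ((8*wmax) * (σ * s (i+1) * A')) from by ring] at hch
      have hend := le_of_mul_le_mul_left hch hu_pos
      rw [hσ']
      calc |B'| ≤ (8*wmax) * (σ * s (i+1) * A') := hend
        _ = (8*wmax) * (σ * s (i+1) * A') := rfl

lemma prod_pm' {s : ℕ → ℝ} (hs : ∀ i, s i = 1 ∨ s i = -1) (t : Finset ℕ) :
    (∏ l ∈ t, s l) = 1 ∨ (∏ l ∈ t, s l) = -1 := by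
  induction t using Finset.induction_on with
  | empty => left; simp
  | insert _ _ hnotmem ih =>
    rw [Finset.prod_insert hnotmem]
    rcases ih with h | h <;> rcases hs _ with h2 | h2 <;> rw [h, h2] <;> norm_num

lemma X_contOn (k n : ℕ) :
    ContinuousOn (fun w : ℝ => X k w n) {w : ℝ | w ≠ 0} := by
  induction n using Nat.strong_induction_on with
  | _ n ih =>
    match n with
    | 0 =>
      exact ContinuousOn.inv₀ continuousOn_id (fun w hw => hw)
    | 1 => exact continuousOn_const
    | (n+2) =>
      have h1 := ih (n+1) (by omega)
      have h0 := ih n (by omega)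
      have heq : (fun w : ℝ => X k w (n+2))
          = fun w : ℝ => (w + w⁻¹ - qn k n) * X k w (n+1) - X k w n := rfl
      rw [heq]
      exact (((continuousOn_id.add (ContinuousOn.inv₀ continuousOn_id fun w hw => hw)).sub
        continuousOn_const).mul h1).sub h0

lemma Af_contOn (k i : ℕ) :
    ContinuousOn (fun w : ℝ => Af k i w) {w : ℝ | w ≠ 0} := by
  have h2 := X_contOn k (i * DD k + 2)
  have h1 := X_contOn k (i * DD k + 1)
  have heq : (fun w : ℝ => Af k i w)
      = fun w : ℝ => X k w (i * DD k + 2) - w⁻¹ * X k w (i * DD k + 1) := rfl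
  rw [heq]
  exact h2.sub ((ContinuousOn.inv₀ continuousOn_id fun w hw => hw).mul h1)

/-- each window contains a root of `Af k (k-1)` -/
lemma root_exists (k : ℕ) (hk : 0 < k) (j : ℕ) (hj : j < k) :
    ∃ w : ℝ, Wv j - 1/2 ≤ w ∧ w ≤ Wv j + 1/2 ∧ Af k (k-1) w = 0 := by
  set a : ℝ := Wv j - 1/2 with ha
  set b : ℝ := Wv j + 1/2 with hb
  have hWj8 : (8:ℝ) ≤ Wv j := Wv_ge j
  have hWjk := Wv_le hj
  have hab : a ≤ b := by rw [ha, hb]; linarith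
  -- generic window facts
  have hwin : ∀ w : ℝ, a ≤ w → w ≤ b → 7 ≤ w ∧ w ≤ 2*(k:ℝ)+9 := by
    intro w h1 h2
    rw [ha] at h1; rw [hb] at h2
    exact ⟨by linarith, by linarith⟩
  -- sign conditions at a test point
  have hseps : ∀ (w : ℝ) (sg : ℕ → ℝ), 7 ≤ w →
      (∀ i, i < k → (sg i = 1 ∧ 1/2 ≤ w - Wv i) ∨ (sg i = -1 ∧ w - Wv i ≤ -1/2)) →
      ∀ i, i < k → 1/2 ≤ sg i * ((w - w⁻¹) - vv i) := by
    intro w sg hw7 hcond i hik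
    have hw0 : w ≠ 0 := by linarith
    have hWi := Wv_ge i
    have hfac := sep_factor i hw0
    have hpos : 0 < (w * Wv i)⁻¹ := by positivity
    have hle : (w * Wv i)⁻¹ ≤ 1 := by
      rw [inv_le_one_iff₀]; right; nlinarith
    rcases hcond i hik with ⟨hs1, hd⟩ | ⟨hs1, hd⟩
    · rw [hs1, one_mul, hfac]
      nlinarith
    · rw [hs1, hfac]
      nlinarith
  -- the two sign profiles
  set sm : ℕ → ℝ := fun l => if l < j then 1 else -1 with hsm
  set sp : ℕ → ℝ := fun l => if l ≤ j then 1 else -1 with hsp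
  have hsmpm : ∀ i, sm i = 1 ∨ sm i = -1 := by
    intro i; rw [hsm]; dsimp only; split
    · left; rfl
    · right; rfl
  have hsppm : ∀ i, sp i = 1 ∨ sp i = -1 := by
    intro i; rw [hsp]; dsimp only; split
    · left; rfl
    · right; rfl
  have hWdiff : ∀ i : ℕ, Wv j - Wv i = 2*(j:ℝ) - 2*(i:ℝ) := by
    intro i; unfold Wv; ring
  have hconda : ∀ i, i < k → (sm i = 1 ∧ 1/2 ≤ a - Wv i) ∨ (sm i = -1 ∧ a - Wv i ≤ -1/2) := by
    intro i hik
    rw [hsm]; dsimp only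
    by_cases hij : i < j
    · left
      refine ⟨if_pos hij, ?_⟩
      have : (i:ℝ) + 1 ≤ (j:ℝ) := by exact_mod_cast hij
      have := hWdiff i
      rw [ha]; linarith
    · right
      refine ⟨if_neg hij, ?_⟩
      have : (j:ℝ) ≤ (i:ℝ) := by exact_mod_cast Nat.le_of_not_lt hij
      have := hWdiff i
      rw [ha]; linarith
  have hcondb : ∀ i, i < k → (sp i = 1 ∧ 1/2 ≤ b - Wv i) ∨ (sp i = -1 ∧ b - Wv i ≤ -1/2) := by
    intro i hik
    rw [hsp]; dsimp only
    by_cases hij : i ≤ j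
    · left
      refine ⟨if_pos hij, ?_⟩
      have : (i:ℝ) ≤ (j:ℝ) := by exact_mod_cast hij
      have := hWdiff i
      rw [hb]; linarith
    · right
      refine ⟨if_neg hij, ?_⟩
      have : (j:ℝ) + 1 ≤ (i:ℝ) := by exact_mod_cast Nat.lt_of_not_le hij
      have := hWdiff i
      rw [hb]; linarith
  have hwa := hwin a le_rfl hab
  have hwb := hwin b hab le_rfl
  have hinva := invariant k a hwa.1 hwa.2 sm hsmpm
      (hseps a sm hwa.1 hconda) (k-1) (by omega)
  have hinvb := invariant k b hwb.1 hwb.2 sp hsppm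
      (hseps b sp hwb.1 hcondb) (k-1) (by omega)
  rw [show k - 1 + 1 = k from by omega] at hinva hinvb
  -- products differ by a sign
  have hjmem : j ∈ Finset.range k := Finset.mem_range.mpr hj
  have hprodm := Finset.mul_prod_erase (Finset.range k) sm hjmem
  have hprodp := Finset.mul_prod_erase (Finset.range k) sp hjmem
  have herase : (∏ l ∈ (Finset.range k).erase j, sp l)
      = ∏ l ∈ (Finset.range k).erase j, sm l := by
    apply Finset.prod_congr rfl
    intro l hl
    have hlj : l ≠ j := Finset.ne_of_mem_erase hl
    rw [hsm, hsp]; dsimp only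
    by_cases h : l < j
    · rw [if_pos h, if_pos (le_of_lt h)]
    · rw [if_neg h, if_neg (by omega)]
  have hsmj : sm j = -1 := by rw [hsm]; dsimp only; rw [if_neg (lt_irrefl j)]
  have hspj : sp j = 1 := by rw [hsp]; dsimp only; rw [if_pos (le_refl j)]
  set P : ℝ := ∏ l ∈ (Finset.range k).erase j, sm l with hP
  have hPpm : P = 1 ∨ P = -1 := prod_pm' hsmpm _
  have hsigm : (∏ l ∈ Finset.range k, sm l) = -P := by rw [← hprodm, hsmj]; ring
  have hsigp : (∏ l ∈ Finset.range k, sp l) = P := by rw [← hprodp, hspj, herase, hP]; ring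
  rw [hsigm] at hinva
  rw [hsigp] at hinvb
  -- continuity on the window
  have hcont : ContinuousOn (fun w => Af k (k-1) w) (Set.Icc a b) := by
    apply (Af_contOn k (k-1)).mono
    intro w hw
    have := hw.1
    rw [ha] at this
    show w ≠ 0
    linarith
  -- intermediate value
  rcases hPpm with hP1 | hP1
  · -- Z a < 0 < Z b
    have hZa : Af k (k-1) a < 0 := by
      have := hinva.1; rw [hP1] at this; linarith
    have hZb : 0 < Af k (k-1) b := by
      have := hinvb.1; rw [hP1] at this; linarith
    have hmem : (0:ℝ) ∈ Set.Icc (Af k (k-1) a) (Af k (k-1) b) := ⟨hZa.le, hZb.le⟩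
    obtain ⟨w, hwmem, hwz⟩ := intermediate_value_Icc hab hcont hmem
    exact ⟨w, hwmem.1, hwmem.2, hwz⟩
  · have hZa : 0 < Af k (k-1) a := by
      have := hinva.1; rw [hP1] at this; linarith
    have hZb : Af k (k-1) b < 0 := by
      have := hinvb.1; rw [hP1] at this; linarith
    have hmem : (0:ℝ) ∈ Set.Icc (Af k (k-1) b) (Af k (k-1) a) := ⟨hZb.le, hZa.le⟩
    obtain ⟨w, hwmem, hwz⟩ := intermediate_value_Icc' hab hcont hmem
    exact ⟨w, hwmem.1, hwmem.2, hwz⟩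

/-- the potential on ℤ -/
def qZ (k : ℕ) : ℤ → ℝ := fun n => if 0 ≤ n then qn k n.toNat else 0

lemma qn_nonneg (k n : ℕ) : 0 ≤ qn k n := by
  unfold qn; split
  · exact (vv_pos _).le
  · exact le_refl 0

lemma qZ_nonneg (k : ℕ) (n : ℤ) : 0 ≤ qZ k n := by
  unfold qZ; split
  · exact qn_nonneg _ _
  · exact le_refl 0

lemma qZ_support (k : ℕ) : (Function.support (qZ k)).Finite := by
  apply Set.Finite.subset (Set.finite_Icc (0:ℤ) (((k-1) * DD k : ℕ) : ℤ))
  intro n hn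
  rw [Function.mem_support] at hn
  unfold qZ at hn
  by_cases h0 : 0 ≤ n
  · rw [if_pos h0] at hn
    rw [Set.mem_Icc]
    refine ⟨h0, ?_⟩
    by_contra hc
    push_neg at hc
    have : (k-1) * DD k < n.toNat := by omega
    exact hn (qn_far this)
  · rw [if_neg h0] at hn
    exact absurd rfl hn

set_option maxHeartbeats 1200000 in
/-- for each window there is an honest ℓ² eigenfunction of the 1D operator -/
lemma eigen_package (k : ℕ) (hk : 0 < k) (j : ℕ) (hj : j < k) :
    ∃ (E : ℝ) (ψ : ℤ → ℝ),
      |E - (2 - Wv j)| ≤ 2/3 ∧ ψ 0 = 1 ∧ (Summable fun n : ℤ => ψ n ^ 2) ∧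
      ∀ n : ℤ, 2 * ψ n - ψ (n+1) - ψ (n-1) - qZ k n * ψ n = E * ψ n := by
  obtain ⟨w, hw1, hw2, hroot⟩ := root_exists k hk j hj
  have hWj8 := Wv_ge j
  have hw7 : 7 ≤ w := by linarith
  have hw0 : (0:ℝ) < w := by linarith
  have hw0' : w ≠ 0 := ne_of_gt hw0
  have hinv_pos : 0 < w⁻¹ := by positivity
  have hinv_le : w⁻¹ ≤ 1/7 := by
    rw [inv_le_comm₀ hw0 (by norm_num)]
    linarith
  have hcc : w * w⁻¹ = 1 := mul_inv_cancel₀ hw0'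
  set ψ : ℤ → ℝ := fun n => if n < 0 then w ^ n else X k w (n.toNat + 1) with hψ
  have hψneg : ∀ n : ℤ, n ≤ 0 → ψ n = w ^ n := by
    intro n hn
    rw [hψ]; dsimp only
    rcases lt_or_eq_of_le hn with h | h
    · rw [if_pos h]
    · subst h
      rw [if_neg (lt_irrefl 0)]
      norm_num [X]
  have hψnat : ∀ m : ℕ, ψ (m:ℤ) = X k w (m+1) := by
    intro m; rw [hψ]; dsimp only
    rw [if_neg (by omega : ¬ (m:ℤ) < 0)]
    norm_num
  have hψ0 : ψ 0 = 1 := by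
    have h := hψnat 0
    simpa [X] using h
  set E : ℝ := 2 - w - w⁻¹ with hE
  refine ⟨E, ψ, ?_, hψ0, ?_, ?_⟩
  · rw [hE, abs_le]
    constructor <;> linarith
  · -- summability
    set P' : ℕ := (k-1) * DD k with hP'
    have hZ0 : X k w (P' + 2) = w⁻¹ * X k w (P' + 1) := by
      have hA0 : Af k (k-1) w = 0 := hroot
      unfold Af at hA0
      rw [← hP'] at hA0
      linarith
    have hdecay : ∀ t : ℕ, X k w (P' + 1 + t) = X k w (P' + 1) * (w⁻¹)^t := by
      intro t
      induction t using Nat.strong_induction_on with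
      | _ t ih =>
        match t with
        | 0 => simp
        | 1 =>
          rw [show P' + 1 + 1 = P' + 2 from rfl, hZ0, pow_one]; ring
        | (t+2) =>
          have h1 := ih (t+1) (by omega)
          have h0 := ih t (by omega)
          have hq : qn k (P' + (t+1)) = 0 := qn_far (by omega)
          have hXr : X k w (P' + 1 + (t+2))
              = (w + w⁻¹ - qn k (P' + (t+1))) * X k w (P' + 1 + (t+1))
                - X k w (P' + 1 + t) := by
            rw [show P' + 1 + (t+2) = (P' + (t+1)) + 2 from by omega, X_rec,
              show (P' + (t+1)) + 1 = P' + 1 + (t+1) from by omega,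
              show P' + (t+1) = P' + 1 + t from by omega]
          rw [hXr, hq, h1, h0]
          linear_combination (X k w (P'+1) * (w⁻¹)^t) * hcc
    have hr1 : ((w⁻¹)^2 : ℝ) < 1 := by nlinarith
    have hr0 : (0:ℝ) ≤ (w⁻¹)^2 := by positivity
    have hgeo : Summable (fun t : ℕ => ((w⁻¹)^2)^t) := summable_geometric_of_lt_one hr0 hr1
    have hnat : Summable (fun m : ℕ => ψ (m:ℤ) ^ 2) := by
      rw [← summable_nat_add_iff (P'+1)]
      have heq : ∀ t : ℕ, ψ ((t + (P'+1) : ℕ) : ℤ) ^ 2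
          = (X k w (P'+1) ^ 2 * (w⁻¹)^2) * ((w⁻¹)^2)^t := by
        intro t
        rw [hψnat]
        rw [show t + (P'+1) + 1 = P' + 1 + (t+1) from by omega, hdecay (t+1)]
        have hexp : (t+1)*2 = 2 + 2*t := by omega
        rw [mul_pow, ← pow_mul, hexp, pow_add, pow_mul]
        ring
      exact (hgeo.mul_left _).congr (fun t => (heq t).symm)
    have hneg : Summable (fun m : ℕ => ψ (-(m:ℤ)) ^ 2) := by
      have heq : ∀ m : ℕ, ψ (-(m:ℤ))^2 = ((w⁻¹)^2)^m := by
        intro m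
        rw [hψneg _ (by omega), zpow_neg, zpow_natCast, ← inv_pow,
          ← pow_mul, ← pow_mul, Nat.mul_comm]
      exact hgeo.congr (fun m => (heq m).symm)
    exact Summable.of_nat_of_neg hnat hneg
  · -- eigen-equation
    intro n
    by_cases hn : n < 0
    · have h1 : ψ n = w ^ n := hψneg n hn.le
      have h2 : ψ (n+1) = w ^ (n+1) := hψneg _ (by omega)
      have h3 : ψ (n-1) = w ^ (n-1) := hψneg _ (by omega)
      have hq : qZ k n = 0 := by unfold qZ; rw [if_neg (by omega)]
      rw [h1, h2, h3, hq, hE, zpow_add_one₀ hw0', zpow_sub_one₀ hw0']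
      ring
    · push_neg at hn
      set m : ℕ := n.toNat with hm
      have hnm : n = (m:ℤ) := by omega
      have h1 : ψ n = X k w (m+1) := by rw [hnm, hψnat]
      have h2 : ψ (n+1) = X k w (m+2) := by
        rw [hnm, show ((m:ℤ)+1) = ((m+1:ℕ):ℤ) from by push_cast; ring, hψnat]
      have h3 : ψ (n-1) = X k w m := by
        rcases Nat.eq_zero_or_pos m with h0 | h0
        · have hn0 : n = 0 := by omega
          rw [hn0]
          rw [hψneg _ (by omega), h0]
          rw [show ((0:ℤ) - 1) = (-1:ℤ) from by ring, zpow_neg_one]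
          rfl
        · have hidx : n - 1 = ((m-1:ℕ):ℤ) := by omega
          rw [hidx, hψnat, show m - 1 + 1 = m from by omega]
      have hq : qZ k n = qn k m := by unfold qZ; rw [if_pos hn]
      rw [h1, h2, h3, hq, hE]
      linear_combination (-1 : ℝ) * X_rec k w m


end Guided

end

open Guided in
set_option maxHeartbeats 1000000 in
/-- Corollary 4.2(i) on the square lattice: for any `C > 0` there is a nonnegative finitely
supported guided potential `q` such that the negative part of the real spectrum of the
associated guided Schrödinger operator has Lebesgue measure exceeding `C`. -/
theorem guided_spectrum_measure_large (C : ℝ) (hC : 0 < C) :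
    ∃ q : ℤ → ℝ, (∀ n, 0 ≤ q n) ∧ (Function.support q).Finite ∧
      ∀ H : lp (fun _ : ℤ × ℤ => ℂ) 2 →L[ℂ] lp (fun _ : ℤ × ℤ => ℂ) 2,
        (∀ (f : lp (fun _ : ℤ × ℤ => ℂ) 2) (m₁ m₂ : ℤ),
          H f (m₁, m₂) = 4 * f (m₁, m₂) - f (m₁ + 1, m₂) - f (m₁ - 1, m₂)
            - f (m₁, m₂ + 1) - f (m₁, m₂ - 1) - (q m₂ : ℂ) * f (m₁, m₂)) →
        ENNReal.ofReal C <
          MeasureTheory.volume ({x : ℝ | (x : ℂ) ∈ spectrum ℂ H} ∩ Set.Iio 0) := by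
  classical
  set k : ℕ := Nat.ceil C + 1 with hk
  have hk0 : 0 < k := by omega
  refine ⟨qZ k, qZ_nonneg k, qZ_support k, ?_⟩
  intro H hH
  have hexists : ∀ j : ℕ, j < k → ∃ (E : ℝ) (ψ : ℤ → ℝ),
      |E - (2 - Wv j)| ≤ 2/3 ∧ ψ 0 = 1 ∧ (Summable fun n : ℤ => ψ n ^ 2) ∧
      ∀ n : ℤ, 2 * ψ n - ψ (n+1) - ψ (n-1) - qZ k n * ψ n = E * ψ n :=
    fun j hj => eigen_package k hk0 j hj
  choose! E ψ hEb hψ0 hψsum heig using hexists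
  have hband : ∀ j, j < k → ∀ x : ℝ, E j ≤ x → x ≤ E j + 4 → (x:ℂ) ∈ spectrum ℂ H := by
    intro j hj x h1 h2
    set θ := Real.arccos ((E j + 2 - x)/2) with hθ
    have hcos : Real.cos θ = (E j + 2 - x)/2 :=
      Real.cos_arccos (by linarith) (by linarith)
    have hx : E j + 2 - 2 * Real.cos θ = x := by rw [hcos]; ring
    have hm := spec_mem hH (ψ j) (E j) (hψ0 j hj) (hψsum j hj) (heig j hj) θ
    rw [hx] at hm
    exact hm
  have hEbound : ∀ j, j < k → 2 - Wv j - 2/3 ≤ E j ∧ E j ≤ 2 - Wv j + 2/3 := by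
    intro j hj
    have h := abs_le.mp (hEb j hj)
    constructor <;> linarith [h.1, h.2]
  have hcover : ∀ j, j < k → Set.Icc (E j) (E 0 + 4) ⊆ {x : ℝ | (x:ℂ) ∈ spectrum ℂ H} := by
    intro j
    induction j with
    | zero =>
      intro hj x hx
      exact hband 0 hj x hx.1 hx.2
    | succ j ih =>
      intro hj x hx
      have hj' : j < k := by omega
      by_cases hxle : x ≤ E (j+1) + 4
      · exact hband (j+1) hj x hx.1 hxle
      · push_neg at hxle
        apply ih hj'
        refine ⟨?_, hx.2⟩
        have h1 := hEbound j hj'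
        have h2 := hEbound (j+1) hj
        have hW : Wv (j+1) = Wv j + 2 := by unfold Wv; push_cast; ring
        linarith [h1.2, h2.1]
  have hk1 : k - 1 < k := by omega
  have hbig := hcover (k-1) hk1
  have hEk := hEbound (k-1) hk1
  have hE0 := hEbound 0 hk0
  have hW0 : Wv 0 = 8 := by unfold Wv; norm_num
  have hWk : Wv (k-1) = 8 + 2*((k:ℝ) - 1) := by
    have hcast : ((k-1:ℕ):ℝ) = (k:ℝ) - 1 := by
      rw [Nat.cast_sub (by omega : 1 ≤ k)]; norm_num
    unfold Wv
    rw [hcast]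
  have hE02 := hE0.2
  rw [hW0] at hE02
  have hsub : Set.Icc (E (k-1)) (E 0 + 4) ⊆ {x : ℝ | (x:ℂ) ∈ spectrum ℂ H} ∩ Set.Iio 0 := by
    intro x hx
    refine ⟨hbig hx, ?_⟩
    show x < 0
    have h2 := hx.2
    linarith
  have hE01 := hE0.1
  rw [hW0] at hE01
  have hEk2 := hEk.2
  rw [hWk] at hEk2
  have hCk : C ≤ (Nat.ceil C : ℝ) := Nat.le_ceil C
  have hkr : (k:ℝ) = (Nat.ceil C : ℝ) + 1 := by rw [hk]; push_cast; ring
  have hlen : C < (E 0 + 4) - E (k-1) := by linarith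
  calc ENNReal.ofReal C < ENNReal.ofReal ((E 0 + 4) - E (k-1)) := by
        rw [ENNReal.ofReal_lt_ofReal_iff (by linarith)]
        exact hlen
    _ = MeasureTheory.volume (Set.Icc (E (k-1)) (E 0 + 4)) := (Real.volume_Icc).symm
    _ ≤ MeasureTheory.volume ({x : ℝ | (x:ℂ) ∈ spectrum ℂ H} ∩ Set.Iio 0) :=
        MeasureTheory.measure_mono hsub
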